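/- For n ≥ 1 and f : [0,∞) → ℝ define the Szász–Mirakjan–Kantorovich operator S_n(f)(x) = (n+1) e^{−nx} Σ_{k=0}^∞ ((nx)^k / k!) ∫_{k/n}^{(k+1)/n} f(t) dt. If f : [0,∞) → ℝ is bounded on [0,∞) and Riemann integrable on each compact subinterval of [0,∞) (i.e. its set of discontinuity points has Lebesgue measure zero), then S_n(f)(x) → f(x) as n → ∞ at every point x ∈ [0,∞) of continuity of f. -/

import Mathlib

open MeasureTheory Filter Topology Set

/-- The Szász–Mirakjan–Kantorovich operator
`S_n(f)(x) = (n+1) e^{-nx} Σ_{k=0}^∞ ((nx)^k / k!) ∫_{k/n}^{(k+1)/n} f`. -/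
noncomputable def szaszMirakjanKantorovich (n : ℕ) (f : ℝ → ℝ) (x : ℝ) : ℝ :=
  ((n : ℝ) + 1) * Real.exp (-((n : ℝ) * x)) *
    ∑' k : ℕ, (((n : ℝ) * x) ^ k / (Nat.factorial k : ℝ)) *
      ∫ t in ((k : ℝ) / (n : ℝ))..(((k : ℝ) + 1) / (n : ℝ)), f t


lemma szk_tsum_q (l : ℝ) : ∑' k : ℕ, l ^ k / (Nat.factorial k : ℝ) = Real.exp l := by
  rw [Real.exp_eq_exp_ℝ, NormedSpace.exp_eq_tsum_div]

lemma szk_shift1 (l : ℝ) (k : ℕ) :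
    (((k + 1 : ℕ)) : ℝ) * (l ^ (k + 1) / ((k + 1).factorial : ℝ)) =
      l * (l ^ k / (Nat.factorial k : ℝ)) := by
  rw [Nat.factorial_succ]
  have hk : ((k : ℝ) + 1) ≠ 0 := by positivity
  have hf : ((Nat.factorial k : ℝ)) ≠ 0 := by positivity
  push_cast
  rw [pow_succ]
  field_simp

lemma szk_summable1 (l : ℝ) :
    Summable (fun k : ℕ => (k : ℝ) * (l ^ k / (Nat.factorial k : ℝ))) := by
  refine (summable_nat_add_iff 1).1 ?_
  have h : Summable (fun k : ℕ => l * (l ^ k / (Nat.factorial k : ℝ))) :=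
    (Real.summable_pow_div_factorial l).mul_left l
  refine h.congr fun k => ?_
  exact (szk_shift1 l k).symm

lemma szk_tsum1 (l : ℝ) :
    ∑' k : ℕ, (k : ℝ) * (l ^ k / (Nat.factorial k : ℝ)) = l * Real.exp l := by
  rw [Summable.tsum_eq_zero_add (szk_summable1 l)]
  simp only [Nat.cast_zero, zero_mul, zero_add]
  have h : ∀ k : ℕ, ((k + 1 : ℕ) : ℝ) * (l ^ (k + 1) / ((k + 1).factorial : ℝ)) =
      l * (l ^ k / (Nat.factorial k : ℝ)) := szk_shift1 l
  calc ∑' k : ℕ, ((k + 1 : ℕ) : ℝ) * (l ^ (k + 1) / ((k + 1).factorial : ℝ))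
      = ∑' k : ℕ, l * (l ^ k / (Nat.factorial k : ℝ)) := tsum_congr h
    _ = l * Real.exp l := by rw [tsum_mul_left, szk_tsum_q]

lemma szk_shift2 (l : ℝ) (k : ℕ) :
    (((k + 1 : ℕ)) : ℝ) * ((((k + 1 : ℕ)) : ℝ) - 1) * (l ^ (k + 1) / ((k + 1).factorial : ℝ)) =
      l * ((k : ℝ) * (l ^ k / (Nat.factorial k : ℝ))) := by
  rw [Nat.factorial_succ]
  have hk : ((k : ℝ) + 1) ≠ 0 := by positivity
  have hf : ((Nat.factorial k : ℝ)) ≠ 0 := by positivity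
  push_cast
  rw [pow_succ]
  field_simp
  ring

lemma szk_summable2 (l : ℝ) :
    Summable (fun k : ℕ => (k : ℝ) * ((k : ℝ) - 1) * (l ^ k / (Nat.factorial k : ℝ))) := by
  refine (summable_nat_add_iff 1).1 ?_
  have h : Summable (fun k : ℕ => l * ((k : ℝ) * (l ^ k / (Nat.factorial k : ℝ)))) :=
    (szk_summable1 l).mul_left l
  refine h.congr fun k => ?_
  exact (szk_shift2 l k).symm

lemma szk_tsum2 (l : ℝ) :
    ∑' k : ℕ, (k : ℝ) * ((k : ℝ) - 1) * (l ^ k / (Nat.factorial k : ℝ)) =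
      l ^ 2 * Real.exp l := by
  rw [Summable.tsum_eq_zero_add (szk_summable2 l)]
  simp only [Nat.cast_zero, zero_mul, zero_add]
  calc ∑' k : ℕ, ((k + 1 : ℕ) : ℝ) * (((k + 1 : ℕ) : ℝ) - 1) *
        (l ^ (k + 1) / ((k + 1).factorial : ℝ))
      = ∑' k : ℕ, l * ((k : ℝ) * (l ^ k / (Nat.factorial k : ℝ))) := tsum_congr (szk_shift2 l)
    _ = l ^ 2 * Real.exp l := by rw [tsum_mul_left, szk_tsum1]; ring

lemma szk_central_summable (l : ℝ) :
    Summable (fun k : ℕ => ((k : ℝ) - l) ^ 2 * (l ^ k / (Nat.factorial k : ℝ))) := by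
  have h : ∀ k : ℕ, ((k : ℝ) - l) ^ 2 * (l ^ k / (Nat.factorial k : ℝ)) =
      (k : ℝ) * ((k : ℝ) - 1) * (l ^ k / (Nat.factorial k : ℝ)) +
        (1 - 2 * l) * ((k : ℝ) * (l ^ k / (Nat.factorial k : ℝ))) +
        l ^ 2 * (l ^ k / (Nat.factorial k : ℝ)) := fun k => by ring
  refine Summable.congr ?_ fun k => (h k).symm
  exact ((szk_summable2 l).add ((szk_summable1 l).mul_left _)).add
    ((Real.summable_pow_div_factorial l).mul_left _)

lemma szk_central_tsum (l : ℝ) :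
    ∑' k : ℕ, ((k : ℝ) - l) ^ 2 * (l ^ k / (Nat.factorial k : ℝ)) = l * Real.exp l := by
  have h : ∀ k : ℕ, ((k : ℝ) - l) ^ 2 * (l ^ k / (Nat.factorial k : ℝ)) =
      (k : ℝ) * ((k : ℝ) - 1) * (l ^ k / (Nat.factorial k : ℝ)) +
        (1 - 2 * l) * ((k : ℝ) * (l ^ k / (Nat.factorial k : ℝ))) +
        l ^ 2 * (l ^ k / (Nat.factorial k : ℝ)) := fun k => by ring
  rw [tsum_congr h,
    Summable.tsum_add ((szk_summable2 l).add ((szk_summable1 l).mul_left _))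
      ((Real.summable_pow_div_factorial l).mul_left _),
    Summable.tsum_add (szk_summable2 l) ((szk_summable1 l).mul_left _),
    tsum_mul_left, tsum_mul_left, szk_tsum2, szk_tsum1, szk_tsum_q]
  ring


lemma szk_integrable (f : ℝ → ℝ) (M : ℝ) (hfb : ∀ y ∈ Ici (0 : ℝ), |f y| ≤ M)
    (hfc : volume {x ∈ Ici (0 : ℝ) | ¬ ContinuousWithinAt f (Ici (0 : ℝ)) x} = 0)
    {a b : ℝ} (ha : 0 ≤ a) (hab : a ≤ b) : IntervalIntegrable f volume a b := by
  obtain ⟨N, hDN, hNm, hN0⟩ := exists_measurable_superset_of_null hfc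
  have hcont : ContinuousOn f (Ici (0 : ℝ) \ N) := by
    intro y hy
    have hyc : ContinuousWithinAt f (Ici (0 : ℝ)) y := by
      by_contra h
      exact hy.2 (hDN ⟨hy.1, h⟩)
    exact hyc.mono diff_subset
  have haem : AEMeasurable f (volume.restrict (Ici (0 : ℝ) \ N)) :=
    hcont.aemeasurable (measurableSet_Ici.diff hNm)
  have h1 : AEMeasurable f (volume.restrict (Ioc a b \ N)) := by
    refine haem.mono_measure (Measure.restrict_mono ?_ le_rfl)
    intro y hy
    exact ⟨le_trans ha hy.1.1.le, hy.2⟩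
  have h2 : AEMeasurable f (volume.restrict ((Ioc a b \ N) ∪ N)) := by
    rw [aemeasurable_union_iff]
    refine ⟨h1, ?_⟩
    rw [Measure.restrict_eq_zero.mpr hN0]
    exact aemeasurable_zero_measure
  have h3 : AEMeasurable f (volume.restrict (Ioc a b)) := by
    refine h2.mono_measure (Measure.restrict_mono ?_ le_rfl)
    intro y hy
    by_cases hyN : y ∈ N
    · exact Or.inr hyN
    · exact Or.inl ⟨hy, hyN⟩
  rw [intervalIntegrable_iff_integrableOn_Ioc_of_le hab]
  refine Integrable.mono' (g := fun _ => M) ?_ h3.aestronglyMeasurable ?_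
  · exact integrableOn_const measure_Ioc_lt_top.ne
  · filter_upwards [ae_restrict_mem measurableSet_Ioc] with y hy
    simpa [Real.norm_eq_abs] using hfb y (le_trans ha hy.1.le)

noncomputable def szkQ (l : ℝ) (k : ℕ) : ℝ := l ^ k / (Nat.factorial k : ℝ)

noncomputable def szkI (n : ℕ) (f : ℝ → ℝ) (k : ℕ) : ℝ :=
  ∫ t in ((k : ℝ) / (n : ℝ))..(((k : ℝ) + 1) / (n : ℝ)), f t

lemma szk_eq (n : ℕ) (f : ℝ → ℝ) (x : ℝ) :
    szaszMirakjanKantorovich n f x =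
      ((n : ℝ) + 1) * Real.exp (-((n : ℝ) * x)) *
        ∑' k : ℕ, szkQ ((n : ℝ) * x) k * szkI n f k := rfl

set_option maxHeartbeats 1000000 in
lemma szk_bound (f : ℝ → ℝ) (M : ℝ) (hM : ∀ y ∈ Ici (0 : ℝ), |f y| ≤ M)
    (hfc : volume {x ∈ Ici (0 : ℝ) | ¬ ContinuousWithinAt f (Ici (0 : ℝ)) x} = 0)
    (x : ℝ) (hx : 0 ≤ x) (ε δ : ℝ) (hε : 0 < ε) (hδ : 0 < δ)
    (hcont : ∀ t : ℝ, 0 ≤ t → |t - x| ≤ δ → |f t - f x| ≤ ε)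
    (n : ℕ) (hn1 : 1 ≤ n) (hnδ : 2 / δ ≤ (n : ℝ)) :
    |szaszMirakjanKantorovich n f x - f x| ≤
      2 * ε + M / n + 20 * M * x / (n * δ ^ 2) := by
  have hn0 : (0 : ℝ) < n := by exact_mod_cast hn1
  have hn1' : (1 : ℝ) ≤ n := by exact_mod_cast hn1
  have hMnn : 0 ≤ M := le_trans (abs_nonneg _) (hM x hx)
  have hfxM : |f x| ≤ M := hM x hx
  set l : ℝ := (n : ℝ) * x with hl
  have hl0 : 0 ≤ l := mul_nonneg hn0.le hx
  have hqnn : ∀ k, 0 ≤ szkQ l k := fun k => by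
    unfold szkQ; positivity
  have hq : Summable (szkQ l) := Real.summable_pow_div_factorial l
  have hqtsum : ∑' k, szkQ l k = Real.exp l := szk_tsum_q l
  set b : ℕ → ℝ := fun k => ((n : ℝ) + 1) * szkI n f k - f x with hbdef
  set c : ℝ := 20 * M / ((n : ℝ) ^ 2 * δ ^ 2) with hc
  have hcnn : 0 ≤ c := by positivity
  set A : ℝ := 2 * ε + M / n with hA
  have hAnn : 0 ≤ A := by positivity
  have hd : ∀ k : ℕ, (((k : ℝ) + 1) / (n : ℝ)) - ((k : ℝ) / (n : ℝ)) = 1 / n := fun k => by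
    field_simp
    ring
  have hle : ∀ k : ℕ, ((k : ℝ) / (n : ℝ)) ≤ (((k : ℝ) + 1) / (n : ℝ)) := fun k => by
    gcongr
    linarith
  have hδn : 1 / (n : ℝ) ≤ δ / 2 := by
    rw [div_le_div_iff₀ hn0 two_pos]
    rw [div_le_iff₀ hδ] at hnδ
    linarith
  have hint : ∀ k : ℕ, IntervalIntegrable f volume ((k : ℝ) / n) (((k : ℝ) + 1) / n) :=
    fun k => szk_integrable f M hM hfc (by positivity) (hle k)
  set J : ℕ → ℝ := fun k => ∫ t in ((k : ℝ) / n)..(((k : ℝ) + 1) / n), (f t - f x) with hJdef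
  have hJI : ∀ k, J k = szkI n f k - f x / n := by
    intro k
    have h1 := intervalIntegral.integral_sub (hint k) (intervalIntegrable_const (c := f x))
    rw [hJdef]
    simp only [h1, intervalIntegral.integral_const, smul_eq_mul, hd k, szkI]
    ring
  have hbk : ∀ k, b k = ((n : ℝ) + 1) * J k + f x / n := by
    intro k
    rw [hbdef]
    simp only
    rw [hJI k]
    field_simp
    ring
  have hmem : ∀ k : ℕ, ∀ t ∈ Set.uIoc ((k : ℝ) / n) (((k : ℝ) + 1) / n),
      0 ≤ t ∧ (k : ℝ) / n < t ∧ t ≤ ((k : ℝ) + 1) / n := by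
    intro k t ht
    rw [Set.uIoc_of_le (hle k)] at ht
    exact ⟨le_trans (by positivity) ht.1.le, ht.1, ht.2⟩
  have hJfar : ∀ k, |J k| ≤ 2 * M / n := by
    intro k
    have h2 : ‖J k‖ ≤ 2 * M * |(((k : ℝ) + 1) / n) - ((k : ℝ) / n)| := by
      apply intervalIntegral.norm_integral_le_of_norm_le_const
      intro t ht
      obtain ⟨ht0, -, -⟩ := hmem k t ht
      have h3 : |f t| ≤ M := hM t ht0
      rw [Real.norm_eq_abs]
      calc |f t - f x| ≤ |f t| + |f x| := abs_sub _ _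
        _ ≤ 2 * M := by linarith
    rw [Real.norm_eq_abs, hd k, abs_of_pos (by positivity : (0 : ℝ) < 1 / n)] at h2
    calc |J k| ≤ 2 * M * (1 / n) := h2
      _ = 2 * M / n := by ring
  have hkey : ∀ k : ℕ, |b k| ≤ A + c * ((k : ℝ) - l) ^ 2 := by
    intro k
    by_cases hnear : |(k : ℝ) / n - x| ≤ δ / 2
    · have hJ : |J k| ≤ ε * (1 / n) := by
        have h2 : ‖J k‖ ≤ ε * |(((k : ℝ) + 1) / n) - ((k : ℝ) / n)| := by
          apply intervalIntegral.norm_integral_le_of_norm_le_const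
          intro t ht
          obtain ⟨ht0, htl, htr⟩ := hmem k t ht
          rw [Real.norm_eq_abs]
          apply hcont t ht0
          obtain ⟨hn1a, hn2a⟩ := abs_le.1 hnear
          rw [abs_le]
          constructor
          · nlinarith
          · have : t - x ≤ ((k : ℝ) + 1) / n - x := by linarith
            have h4 : ((k : ℝ) + 1) / n = (k : ℝ) / n + 1 / n := by ring
            nlinarith
        rw [Real.norm_eq_abs, hd k, abs_of_pos (by positivity : (0 : ℝ) < 1 / n)] at h2
        exact h2
      have h5 : |b k| ≤ A := by
        rw [hbk k, hA]
        calc |((n : ℝ) + 1) * J k + f x / n| ≤ ((n : ℝ) + 1) * |J k| + |f x| / n := by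
              refine le_trans (abs_add_le _ _) ?_
              rw [abs_mul, abs_div, abs_of_pos (by positivity : (0 : ℝ) < (n : ℝ) + 1),
                abs_of_pos hn0]
          _ ≤ 2 * ε + M / n := by
              have h6 : ((n : ℝ) + 1) * |J k| ≤ ((n : ℝ) + 1) * (ε * (1 / n)) := by
                apply mul_le_mul_of_nonneg_left hJ (by positivity)
              have h7 : ((n : ℝ) + 1) * (ε * (1 / n)) ≤ 2 * ε := by
                rw [show ((n : ℝ) + 1) * (ε * (1 / n)) = ε * ((n : ℝ) + 1) / n by ring,
                  div_le_iff₀ hn0]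
                nlinarith
              have h8 : |f x| / n ≤ M / n := by gcongr
              linarith
      have h9 : 0 ≤ c * ((k : ℝ) - l) ^ 2 := by positivity
      linarith
    · push_neg at hnear
      have hfar2 : ((n : ℝ) * δ / 2) ^ 2 ≤ ((k : ℝ) - l) ^ 2 := by
        have habs : |(k : ℝ) - l| = (n : ℝ) * |(k : ℝ) / n - x| := by
          rw [hl, ← abs_of_pos hn0, ← abs_mul]
          congr 1
          field_simp
          rw [abs_of_pos hn0]
          ring
        have h1 : (n : ℝ) * δ / 2 < |(k : ℝ) - l| := by
          rw [habs]
          calc (n : ℝ) * δ / 2 = n * (δ / 2) := by ring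
            _ < n * |(k : ℝ) / n - x| := by
                exact mul_lt_mul_of_pos_left hnear hn0
        calc ((n : ℝ) * δ / 2) ^ 2 ≤ |(k : ℝ) - l| ^ 2 :=
              pow_le_pow_left₀ (by positivity) h1.le 2
          _ = ((k : ℝ) - l) ^ 2 := sq_abs _
      have hb5 : |b k| ≤ 5 * M := by
        rw [hbk k]
        have h10 := hJfar k
        calc |((n : ℝ) + 1) * J k + f x / n| ≤ ((n : ℝ) + 1) * |J k| + |f x| / n := by
              refine le_trans (abs_add_le _ _) ?_
              rw [abs_mul, abs_div, abs_of_pos (by positivity : (0 : ℝ) < (n : ℝ) + 1),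
                abs_of_pos hn0]
          _ ≤ 5 * M := by
              have h11 : ((n : ℝ) + 1) * |J k| ≤ ((n : ℝ) + 1) * (2 * M / n) := by
                apply mul_le_mul_of_nonneg_left h10 (by positivity)
              have h12 : ((n : ℝ) + 1) * (2 * M / n) ≤ 4 * M := by
                rw [show ((n : ℝ) + 1) * (2 * M / n) = 2 * M * ((n : ℝ) + 1) / n by ring,
                  div_le_iff₀ hn0]
                nlinarith
              have h13 : |f x| / n ≤ M := by
                rw [div_le_iff₀ hn0]
                nlinarith
              linarith
      have h14 : 5 * M ≤ c * ((k : ℝ) - l) ^ 2 := by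
        have h15 : c * ((n : ℝ) * δ / 2) ^ 2 = 5 * M := by
          rw [hc]
          field_simp
          ring
        calc 5 * M = c * ((n : ℝ) * δ / 2) ^ 2 := h15.symm
          _ ≤ c * ((k : ℝ) - l) ^ 2 := mul_le_mul_of_nonneg_left hfar2 hcnn
      linarith
  -- summability
  have hRHSsum : Summable (fun k : ℕ => A * szkQ l k + c * (((k : ℝ) - l) ^ 2 * szkQ l k)) := by
    refine ((hq.mul_left A).add (Summable.mul_left c ?_))
    have := szk_central_summable l
    exact this
  have hptw : ∀ k : ℕ, |szkQ l k * b k| ≤ A * szkQ l k + c * (((k : ℝ) - l) ^ 2 * szkQ l k) := by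
    intro k
    rw [abs_mul, abs_of_nonneg (hqnn k)]
    calc szkQ l k * |b k| ≤ szkQ l k * (A + c * ((k : ℝ) - l) ^ 2) :=
          mul_le_mul_of_nonneg_left (hkey k) (hqnn k)
      _ = A * szkQ l k + c * (((k : ℝ) - l) ^ 2 * szkQ l k) := by ring
  have habsum : Summable (fun k : ℕ => |szkQ l k * b k|) :=
    Summable.of_nonneg_of_le (fun k => abs_nonneg _) hptw hRHSsum
  have hqb : Summable (fun k : ℕ => szkQ l k * b k) := by
    refine habsum.of_abs
  -- tsum bound
  have htsum_bound : |∑' k, szkQ l k * b k| ≤ A * Real.exp l + c * (l * Real.exp l) := by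
    have h1 : |∑' k, szkQ l k * b k| ≤ ∑' k, |szkQ l k * b k| := by
      have := norm_tsum_le_tsum_norm (f := fun k => szkQ l k * b k) habsum
      simpa only [Real.norm_eq_abs] using this
    have h2 : ∑' k, |szkQ l k * b k| ≤
        ∑' k, (A * szkQ l k + c * (((k : ℝ) - l) ^ 2 * szkQ l k)) :=
      Summable.tsum_le_tsum hptw habsum hRHSsum
    have h3 : ∑' k, (A * szkQ l k + c * (((k : ℝ) - l) ^ 2 * szkQ l k)) =
        A * Real.exp l + c * (l * Real.exp l) := by
      simp only [szkQ]
      rw [Summable.tsum_add ((Real.summable_pow_div_factorial l).mul_left A)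
          ((szk_central_summable l).mul_left c),
        tsum_mul_left, tsum_mul_left, szk_tsum_q, szk_central_tsum]
    linarith
  -- identity
  have hSid : szaszMirakjanKantorovich n f x - f x = Real.exp (-l) * ∑' k, szkQ l k * b k := by
    have hs1 : Summable (fun k => szkQ l k * f x) := hq.mul_right _
    have hs2 : Summable (fun k => szkQ l k * (((n : ℝ) + 1) * szkI n f k)) := by
      have he : (fun k => szkQ l k * (((n : ℝ) + 1) * szkI n f k)) =
          fun k => szkQ l k * b k + szkQ l k * f x := funext fun k => by rw [hbdef]; ring
      rw [he]; exact hqb.add hs1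
    have key : ∑' k, szkQ l k * b k =
        ((n : ℝ) + 1) * (∑' k, szkQ l k * szkI n f k) - Real.exp l * f x := by
      calc ∑' k, szkQ l k * b k
          = ∑' k, (szkQ l k * (((n : ℝ) + 1) * szkI n f k) - szkQ l k * f x) :=
            tsum_congr fun k => by rw [hbdef]; ring
        _ = (∑' k, szkQ l k * (((n : ℝ) + 1) * szkI n f k)) - ∑' k, szkQ l k * f x :=
            Summable.tsum_sub hs2 hs1
        _ = ((n : ℝ) + 1) * (∑' k, szkQ l k * szkI n f k) - Real.exp l * f x := by
            rw [tsum_mul_right, hqtsum]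
            congr 1
            rw [← tsum_mul_left]
            exact tsum_congr fun k => by ring
    rw [szk_eq, ← hl, key]
    rw [Real.exp_neg]
    have hene : Real.exp l ≠ 0 := Real.exp_ne_zero l
    field_simp
  -- conclusion
  rw [hSid, abs_mul, abs_of_pos (Real.exp_pos (-l))]
  have hfinal : Real.exp (-l) * (A * Real.exp l + c * (l * Real.exp l)) =
      A + c * l := by
    rw [Real.exp_neg]
    field_simp
  calc Real.exp (-l) * |∑' k, szkQ l k * b k|
      ≤ Real.exp (-l) * (A * Real.exp l + c * (l * Real.exp l)) :=
        mul_le_mul_of_nonneg_left htsum_bound (Real.exp_pos _).le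
    _ = A + c * l := hfinal
    _ = 2 * ε + M / n + 20 * M * x / (n * δ ^ 2) := by
        rw [hA, hc, hl]
        field_simp

/-- If `f : [0,∞) → ℝ` is bounded on `[0,∞)` and Riemann integrable
on each compact subinterval (its set of discontinuity points in `[0,∞)` has Lebesgue
measure zero), then `S_n(f)(x) → f x` as `n → ∞` at every point `x ∈ [0,∞)` of
continuity of `f`. -/
theorem szaszMirakjanKantorovich_tendsto (f : ℝ → ℝ)
    (hfb : ∃ M : ℝ, ∀ x ∈ Ici (0 : ℝ), |f x| ≤ M)
    (hfc : volume {x ∈ Ici (0 : ℝ) | ¬ ContinuousWithinAt f (Ici (0 : ℝ)) x} = 0)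
    (x : ℝ) (hx : x ∈ Ici (0 : ℝ)) (hfx : ContinuousWithinAt f (Ici (0 : ℝ)) x) :
    Tendsto (fun n => szaszMirakjanKantorovich n f x) atTop (𝓝 (f x)) := by
  obtain ⟨M, hM⟩ := hfb
  have hx0 : (0 : ℝ) ≤ x := hx
  have hMnn : 0 ≤ M := le_trans (abs_nonneg _) (hM x hx)
  rw [Metric.tendsto_atTop]
  intro ε hε
  have hε5 : 0 < ε / 5 := by positivity
  -- continuity gives δ
  have h1 : f ⁻¹' Metric.closedBall (f x) (ε / 5) ∈ 𝓝[Ici (0 : ℝ)] x :=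
    hfx (Metric.closedBall_mem_nhds _ hε5)
  rw [Metric.mem_nhdsWithin_iff] at h1
  obtain ⟨δ0, hδ0, hsub⟩ := h1
  set δ : ℝ := δ0 / 2 with hδdef
  have hδ : 0 < δ := by positivity
  have hcont : ∀ t : ℝ, 0 ≤ t → |t - x| ≤ δ → |f t - f x| ≤ ε / 5 := by
    intro t ht h
    have htb : t ∈ Metric.ball x δ0 ∩ Ici (0 : ℝ) := by
      refine ⟨?_, ht⟩
      rw [Metric.mem_ball, Real.dist_eq]
      calc |t - x| ≤ δ0 / 2 := h
        _ < δ0 := by linarith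
    have := hsub htb
    simpa [Metric.mem_closedBall, Real.dist_eq] using this
  obtain ⟨N, hN⟩ := exists_nat_ge (max (max (2 / δ) (5 * M / ε)) (100 * M * x / (δ ^ 2 * ε)))
  refine ⟨N + 1, fun n hn => ?_⟩
  have hn1 : 1 ≤ n := le_trans (Nat.le_add_left 1 N) hn
  have hnN : (N : ℝ) ≤ n := by exact_mod_cast le_trans (Nat.le_succ N) hn
  have hn0 : (0 : ℝ) < n := by exact_mod_cast hn1
  have hmax := le_trans hN hnN
  have ha1 : 2 / δ ≤ (n : ℝ) := le_trans (le_trans (le_max_left _ _) (le_max_left _ _)) hmax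
  have ha2 : 5 * M / ε ≤ (n : ℝ) := le_trans (le_trans (le_max_right _ _) (le_max_left _ _)) hmax
  have ha3 : 100 * M * x / (δ ^ 2 * ε) ≤ (n : ℝ) := le_trans (le_max_right _ _) hmax
  have hbd := szk_bound f M hM hfc x hx0 (ε / 5) δ hε5 hδ hcont n hn1 ha1
  rw [Real.dist_eq]
  have hb1 : M / n ≤ ε / 5 := by
    rw [div_le_div_iff₀ hn0 (by norm_num : (0:ℝ) < 5)]
    rw [div_le_iff₀ hε] at ha2
    linarith
  have hb2 : 20 * M * x / (n * δ ^ 2) ≤ ε / 5 := by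
    rw [div_le_div_iff₀ (by positivity) (by norm_num : (0:ℝ) < 5)]
    rw [div_le_iff₀ (by positivity : (0:ℝ) < δ ^ 2 * ε)] at ha3
    nlinarith
  calc |szaszMirakjanKantorovich n f x - f x| ≤
      2 * (ε / 5) + M / n + 20 * M * x / (n * δ ^ 2) := hbd
    _ ≤ 2 * (ε / 5) + ε / 5 + ε / 5 := by linarith
    _ < ε := by linarith
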